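/- Let ρ ∈ (0,1) and let g : [0,1] → ℝ be continuous and satisfy, for all x ∈ [0,1], g(1−x) = ρ·∫_{z=0}^{x} exp(ρ(x−z))·g(z) dz, together with ∫_{0}^{1} g(x) dx = 0. Then g ≡ 0 on [0,1]. -/
import Mathlib


open Real MeasureTheory intervalIntegral Set

theorem homogeneous_equation_unique
    (ρ : ℝ) (hρ : ρ ∈ Set.Ioo (0:ℝ) 1)
    (g : ℝ → ℝ) (hg : ContinuousOn g (Set.Icc 0 1))
    (heq : ∀ x ∈ Set.Icc (0:ℝ) 1,
      g (1 - x) = ρ * ∫ z in (0:ℝ)..x, Real.exp (ρ * (x - z)) * g z)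
    (hint : (∫ x in (0:ℝ)..1, g x) = 0) :
    ∀ x ∈ Set.Icc (0:ℝ) 1, g x = 0 := by
  obtain ⟨hρ0, hρ1⟩ := hρ
  obtain ⟨x₀, hx₀, hmax⟩ := isCompact_Icc.exists_isMaxOn
    (Set.nonempty_Icc.2 (zero_le_one)) (hg.abs)
  obtain ⟨M, hMdef⟩ : ∃ M : ℝ, M = |g x₀| := ⟨_, rfl⟩
  have hM0 : 0 ≤ M := hMdef ▸ abs_nonneg _
  have hMle : ∀ y ∈ Set.Icc (0:ℝ) 1, |g y| ≤ M := fun y hy => hMdef ▸ hmax hy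
  obtain ⟨k, hkdef⟩ : ∃ k : ℝ, k = max ρ ((Real.exp ρ - 1)/2) := ⟨_, rfl⟩
  have hexpρ1 : (1:ℝ) ≤ Real.exp ρ := by
    rw [← Real.exp_zero]; exact Real.exp_le_exp.2 hρ0.le
  have hk1 : k < 1 := by
    rw [hkdef]
    apply max_lt hρ1
    have h3 : Real.exp ρ < 3 := by
      have h1 : Real.exp ρ < Real.exp 1 := Real.exp_lt_exp.2 hρ1
      nlinarith [Real.exp_one_lt_d9]
    linarith
  have hkρ : ρ ≤ k := hkdef ▸ le_max_left _ _
  have hke : (Real.exp ρ - 1)/2 ≤ k := hkdef ▸ le_max_right _ _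
  have hk0 : 0 ≤ k := le_trans hρ0.le hkρ
  -- integrability of g on subintervals
  have hgi : ∀ a b : ℝ, 0 ≤ a → a ≤ b → b ≤ 1 → IntervalIntegrable g volume a b := by
    intro a b ha hab hb
    exact (hg.mono (by rw [Set.uIcc_of_le hab]; exact Set.Icc_subset_Icc ha hb)).intervalIntegrable
  -- key contraction estimate
  have key : ∀ x ∈ Set.Icc (0:ℝ) 1, |g (1 - x)| ≤ k * M := by
    rintro x ⟨hx0, hx1⟩
    have hgeq := heq x ⟨hx0, hx1⟩
    have hg0x : IntervalIntegrable g volume 0 x := hgi 0 x le_rfl hx0 hx1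
    have hcont1 : ContinuousOn (fun z => (Real.exp (ρ * (x - z)) - 1) * g z) (Set.uIcc 0 x) := by
      rw [Set.uIcc_of_le hx0]
      exact (((Real.continuous_exp.comp (continuous_const.mul
        (continuous_const.sub continuous_id))).sub continuous_const).continuousOn).mul
        (hg.mono (Set.Icc_subset_Icc le_rfl hx1))
    have hint1 : IntervalIntegrable (fun z => (Real.exp (ρ * (x - z)) - 1) * g z) volume 0 x :=
      hcont1.intervalIntegrable
    -- split the integral
    have hsplit : (∫ z in (0:ℝ)..x, Real.exp (ρ * (x - z)) * g z)
        = (∫ z in (0:ℝ)..x, (Real.exp (ρ * (x - z)) - 1) * g z) + ∫ z in (0:ℝ)..x, g z := by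
      rw [← intervalIntegral.integral_add hint1 hg0x]
      congr 1; ext z; ring
    -- bound A
    have hA : |∫ z in (0:ℝ)..x, (Real.exp (ρ * (x - z)) - 1) * g z|
        ≤ (Real.exp ρ - 1) * M * (x^2/2) := by
      have hptwise : ∀ z ∈ Set.Icc (0:ℝ) x,
          |(Real.exp (ρ * (x - z)) - 1) * g z| ≤ (Real.exp ρ - 1) * M * (x - z) := by
        intro z hz
        have hz0 : 0 ≤ z := hz.1
        have hzx : z ≤ x := hz.2
        have hs0 : 0 ≤ x - z := by linarith
        have hs1 : x - z ≤ 1 := by linarith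
        have hconv : Real.exp (ρ * (x - z)) ≤ 1 + (x - z) * (Real.exp ρ - 1) := by
          have h := convexOn_exp.2 (Set.mem_univ (0:ℝ)) (Set.mem_univ ρ)
            (by linarith : (0:ℝ) ≤ 1 - (x - z)) hs0 (by ring)
          simp only [smul_eq_mul, mul_zero, zero_add, Real.exp_zero] at h
          calc Real.exp (ρ * (x - z)) = Real.exp ((x - z) * ρ) := by ring_nf
            _ ≤ (1 - (x - z)) * 1 + (x - z) * Real.exp ρ := by
                simpa [Real.exp_zero] using h
            _ = 1 + (x - z) * (Real.exp ρ - 1) := by ring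
        have hge1 : 1 ≤ Real.exp (ρ * (x - z)) := by
          rw [← Real.exp_zero]; exact Real.exp_le_exp.2 (by positivity)
        have hgz : |g z| ≤ M := hMle z ⟨hz0, le_trans hzx hx1⟩
        rw [abs_mul, abs_of_nonneg (by linarith : (0:ℝ) ≤ Real.exp (ρ * (x - z)) - 1)]
        have h1 : Real.exp (ρ * (x - z)) - 1 ≤ (x - z) * (Real.exp ρ - 1) := by linarith
        calc (Real.exp (ρ * (x - z)) - 1) * |g z|
            ≤ ((x - z) * (Real.exp ρ - 1)) * M := by
              apply mul_le_mul h1 hgz (abs_nonneg _)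
              nlinarith
          _ = (Real.exp ρ - 1) * M * (x - z) := by ring
      calc |∫ z in (0:ℝ)..x, (Real.exp (ρ * (x - z)) - 1) * g z|
          ≤ ∫ z in (0:ℝ)..x, |(Real.exp (ρ * (x - z)) - 1) * g z| :=
            intervalIntegral.abs_integral_le_integral_abs hx0
        _ ≤ ∫ z in (0:ℝ)..x, (Real.exp ρ - 1) * M * (x - z) := by
            apply intervalIntegral.integral_mono_on hx0 hint1.abs
            · exact (continuousOn_const.mul
                ((continuous_const.sub continuous_id).continuousOn)).intervalIntegrable
                |>.mono_set (by rw [Set.uIcc_of_le hx0])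
            · exact hptwise
        _ = (Real.exp ρ - 1) * M * (x^2/2) := by
            rw [intervalIntegral.integral_const_mul]
            congr 1
            rw [intervalIntegral.integral_sub intervalIntegrable_const
              intervalIntegral.intervalIntegrable_id,
              intervalIntegral.integral_const, integral_id]
            simp; ring
    -- bound B
    have hB : |∫ z in (0:ℝ)..x, g z| ≤ (1 - x) * M := by
      have hadd : (∫ z in (0:ℝ)..x, g z) + (∫ z in x..1, g z) = ∫ z in (0:ℝ)..1, g z :=
        intervalIntegral.integral_add_adjacent_intervals hg0x (hgi x 1 hx0 hx1 le_rfl)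
      have hBeq : (∫ z in (0:ℝ)..x, g z) = - ∫ z in x..1, g z := by
        rw [hint] at hadd; linarith
      rw [hBeq, abs_neg]
      have hb := intervalIntegral.norm_integral_le_of_norm_le_const
        (C := M) (f := g) (a := x) (b := 1) (by
          intro z hz
          rw [Set.uIoc_of_le hx1] at hz
          exact hMle z ⟨le_trans hx0 hz.1.le, hz.2⟩)
      rw [Real.norm_eq_abs] at hb
      calc |∫ z in x..1, g z| ≤ M * |1 - x| := hb
        _ = (1 - x) * M := by rw [abs_of_nonneg (by linarith)]; ring
    -- combine
    rw [hgeq, hsplit]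
    have habs : |ρ * ((∫ z in (0:ℝ)..x, (Real.exp (ρ * (x - z)) - 1) * g z)
        + ∫ z in (0:ℝ)..x, g z)|
        ≤ ρ * ((Real.exp ρ - 1) * M * (x^2/2) + (1 - x) * M) := by
      rw [abs_mul, abs_of_pos hρ0]
      apply mul_le_mul_of_nonneg_left _ hρ0.le
      calc |(∫ z in (0:ℝ)..x, (Real.exp (ρ * (x - z)) - 1) * g z) + ∫ z in (0:ℝ)..x, g z|
          ≤ |∫ z in (0:ℝ)..x, (Real.exp (ρ * (x - z)) - 1) * g z|
            + |∫ z in (0:ℝ)..x, g z| := abs_add_le _ _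
        _ ≤ (Real.exp ρ - 1) * M * (x^2/2) + (1 - x) * M := add_le_add hA hB
    refine le_trans habs ?_
    have hx2 : x^2 ≤ x := by nlinarith
    have hρx2 : ρ * x^2 ≤ x := by nlinarith
    have h1 : ρ * ((Real.exp ρ - 1) * M * (x^2/2)) ≤ (Real.exp ρ - 1)/2 * M * x := by
      nlinarith [mul_le_mul_of_nonneg_left hρx2
        (mul_nonneg (by linarith : (0:ℝ) ≤ Real.exp ρ - 1) hM0)]
    have h2 : (Real.exp ρ - 1)/2 * M * x ≤ k * M * x :=
      mul_le_mul_of_nonneg_right (mul_le_mul_of_nonneg_right hke hM0) hx0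
    have h3 : ρ * ((1 - x) * M) ≤ k * ((1 - x) * M) :=
      mul_le_mul_of_nonneg_right hkρ (mul_nonneg (by linarith) hM0)
    nlinarith [h1, h2, h3]
  -- conclude M = 0
  have hMk : M ≤ k * M := by
    have h := key (1 - x₀) ⟨by linarith [hx₀.2], by linarith [hx₀.1]⟩
    simpa [hMdef] using h
  have hMzero : M = 0 := by
    have h4 : k * M ≤ M := by nlinarith [mul_nonneg (by linarith : (0:ℝ) ≤ 1 - k) hM0]
    have hMeq : M = k * M := le_antisymm hMk h4
    have h5 : (1 - k) * M = 0 := by linear_combination hMeq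
    rcases mul_eq_zero.1 h5 with h | h
    · linarith
    · exact h
  intro x hx
  have hx' := hMle x hx
  rw [hMzero] at hx'
  exact abs_eq_zero.1 (le_antisymm hx' (abs_nonneg _))
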